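/- Fix an integer c ≥ 1, a real t > 0, and let (r_i) satisfy the recurrence r_{ic+j+1} = (1+4/t)·r_{ic+j} + (2+4/t)·r_{ic} for all i ≥ 0 and j ∈ [0,c-1]. Then for every i ≥ 0 and j ∈ [0, c-1], r_{ic+j} = [(1+4/t)^j·(t/2+2) - (t/2+1)]·r_{ic}, and consequently r_{ic} = [(1+4/t)^c·(t/2+2) - (t/2+1)]^i · r_0. -/

import Mathlib

/-- For `c ≥ 1`, `t > 0` and a sequence satisfying
`r_{i+1} = (1+4/t)·r_i + (2+4/t)·r_{⌊i/c⌋·c}` with `r_0 > 0`: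
`r_{ic+j} = [(1+4/t)^j·(t/2+2) - (t/2+1)]·r_{ic}` for `j ∈ [0,c-1]`, and
`r_{ic} = [(1+4/t)^c·(t/2+2) - (t/2+1)]^i·r_0`. -/
theorem stmt_11 (c : ℕ) (hc : 1 ≤ c) (t : ℝ) (ht : 0 < t) (r : ℕ → ℝ)
    (hr0 : 0 < r 0)
    (hrec : ∀ i : ℕ, r (i + 1) = (1 + 4 / t) * r i + (2 + 4 / t) * r (i / c * c)) :
    (∀ i : ℕ, ∀ j < c, r (i * c + j)
        = ((1 + 4 / t) ^ j * (t / 2 + 2) - (t / 2 + 1)) * r (i * c)) ∧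
    (∀ i : ℕ, r (i * c)
        = ((1 + 4 / t) ^ c * (t / 2 + 2) - (t / 2 + 1)) ^ i * r 0) := by
  have htne : t ≠ 0 := ne_of_gt ht
  have key : ∀ i : ℕ, ∀ j ≤ c, r (i * c + j)
      = ((1 + 4 / t) ^ j * (t / 2 + 2) - (t / 2 + 1)) * r (i * c) := by
    intro i j hj
    induction j with
    | zero =>
        have h1 : ((1 + 4 / t) ^ 0 * (t / 2 + 2) - (t / 2 + 1) : ℝ) = 1 := by ring
        rw [Nat.add_zero, h1, one_mul]
    | succ j ih =>
        have hjc : j < c := hj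
        have hdiv : (i * c + j) / c = i := by
          rw [Nat.add_comm, Nat.add_mul_div_right _ _ (by omega : 0 < c),
            Nat.div_eq_of_lt hjc]; omega
        have h := hrec (i * c + j)
        rw [hdiv] at h
        have hgoal : r (i * c + (j + 1)) = r (i * c + j + 1) := by ring_nf
        rw [hgoal, h, ih (le_of_lt hjc)]
        linear_combination (-2 * r (i * c)) * mul_inv_cancel₀ htne
  constructor
  · intro i j hj
    exact key i j (le_of_lt hj)
  · intro i
    induction i with
    | zero => simp
    | succ i ih =>
        have h := key i c le_rfl
        have : (i + 1) * c = i * c + c := by ring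
        rw [this, h, ih, pow_succ]
        ring
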